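/- For g ≥ 2, maps α_i : {0,…,g−1} → ℝ, an index i ≥ 0, an integer R ≥ 1 with R ∣ g, an integer a coprime to R, and any β ∈ ℝ: Σ_{0≤r<R} φ_i(β + ar/R)² ≤ g², where φ_i(β) := |Σ_{0≤n<g} e(α_i(n) − βn)|. -/

import Mathlib

/-- `e(t) = exp(2πit)`. -/
noncomputable def eC (t : ℝ) : ℂ := Complex.exp (2 * (Real.pi : ℂ) * Complex.I * (t : ℂ))

/-- `φ_i(β) = |Σ_{0≤n<g} e(α_i(n) − βn)|`. -/
noncomputable def phi (g : ℕ) (α : ℕ → ℕ → ℝ) (i : ℕ) (β : ℝ) : ℝ :=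
  ‖∑ n ∈ Finset.range g, eC (α i n - β * n)‖

lemma eC_add (x y : ℝ) : eC (x + y) = eC x * eC y := by
  simp only [eC, ← Complex.exp_add]
  push_cast; ring_nf

lemma eC_abs (x : ℝ) : ‖eC x‖ = 1 := by
  simp only [eC, Complex.norm_exp]
  have : (2 * (Real.pi : ℂ) * Complex.I * (x : ℂ)).re = 0 := by simp
  simp [this]

lemma eC_conj (x : ℝ) : (starRingEnd ℂ) (eC x) = eC (-x) := by
  simp only [eC, ← Complex.exp_conj]
  congr 1
  simp only [map_mul, Complex.conj_I, Complex.conj_ofReal, map_ofNat]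
  push_cast; ring

lemma eC_int (k : ℤ) : eC (k : ℝ) = 1 := by
  simp only [eC]
  have : 2 * (Real.pi : ℂ) * Complex.I * ((k : ℝ) : ℂ) = (k : ℤ) * (2 * Real.pi * Complex.I) := by
    push_cast; ring
  rw [this, Complex.exp_int_mul_two_pi_mul_I]

lemma eC_eq_one_iff (x : ℝ) : eC x = 1 ↔ ∃ k : ℤ, x = k := by
  constructor
  · intro h
    rw [eC, Complex.exp_eq_one_iff] at h
    obtain ⟨n, hn⟩ := h
    refine ⟨n, ?_⟩
    have h2 : (2 * (Real.pi : ℂ) * Complex.I) ≠ 0 := by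
      simp [Real.pi_ne_zero, Complex.I_ne_zero]
    have : ((x : ℂ)) = n := mul_left_cancel₀ h2 (hn.trans (mul_comm _ _))
    exact_mod_cast this
  · rintro ⟨k, rfl⟩; exact eC_int k

lemma eC_pow (x : ℝ) (r : ℕ) : eC x ^ r = eC (x * r) := by
  rw [eC, eC, ← Complex.exp_nat_mul]
  congr 1
  push_cast; ring

lemma eC_geom (R : ℕ) (hR1 : 1 ≤ R) (a : ℤ) (ha : IsCoprime a (R : ℤ)) (k : ℤ) :
    ∑ r ∈ Finset.range R, eC ((a : ℝ) * k * r / R) = if (R : ℤ) ∣ k then (R : ℂ) else 0 := by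
  have hRne : (R : ℝ) ≠ 0 := Nat.cast_ne_zero.mpr (by omega)
  have hterm : ∀ r : ℕ, eC ((a : ℝ) * k * r / R) = eC ((a : ℝ) * k / R) ^ r := by
    intro r; rw [eC_pow]; congr 1; field_simp
  simp only [hterm]
  by_cases hdvd : (R : ℤ) ∣ k
  · obtain ⟨j, rfl⟩ := hdvd
    have h1 : eC ((a : ℝ) * ((R : ℝ) * (j : ℝ)) / R) = 1 := by
      have : (a : ℝ) * ((R : ℝ) * (j : ℝ)) / R = ((a * j : ℤ) : ℝ) := by
        push_cast; field_simp
      rw [this, eC_int]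
    push_cast
    simp [h1]
  · have hz1 : eC ((a : ℝ) * k / R) ≠ 1 := by
      intro h
      obtain ⟨m, hm⟩ := (eC_eq_one_iff _).mp h
      have hm' : (a : ℝ) * k = m * R := by
        field_simp at hm
        linarith
      have hint : (a * k : ℤ) = m * R := by exact_mod_cast hm'
      exact hdvd (ha.symm.dvd_of_dvd_mul_left ⟨m, by linarith [hint]⟩)
    rw [geom_sum_eq hz1, eC_pow]
    have : (a : ℝ) * k / R * R = ((a * k : ℤ) : ℝ) := by push_cast; field_simp
    rw [this, eC_int]
    simp [hdvd]

lemma count_le (g R : ℕ) (hR1 : 1 ≤ R) (hRg : R ∣ g) (n : ℕ) :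
    ((Finset.range g).filter (fun m : ℕ => (R : ℤ) ∣ ((m : ℤ) - (n : ℤ)))).card ≤ g / R := by
  classical
  have h := Finset.card_le_card_of_injOn (fun m => m / R)
    (s := (Finset.range g).filter (fun m : ℕ => (R : ℤ) ∣ ((m : ℤ) - (n : ℤ))))
    (t := Finset.range (g / R))
    (fun m hm => by
      simp only [Finset.mem_coe, Finset.mem_filter, Finset.mem_range] at hm ⊢
      exact Nat.div_lt_div_of_lt_of_dvd hRg hm.1)
    (fun m1 h1 m2 h2 hq => by
      simp only [Finset.mem_coe, Finset.mem_filter, Finset.mem_range] at h1 h2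
      have hd : (R : ℤ) ∣ ((m1 : ℤ) - m2) := by
        have := dvd_sub h1.2 h2.2; simpa using this
      have hmod : (m1 : ℤ) % R = (m2 : ℤ) % R := (Int.modEq_iff_dvd.mpr hd).symm
      have hmodn : m1 % R = m2 % R := by
        have : ((m1 % R : ℕ) : ℤ) = ((m2 % R : ℕ) : ℤ) := by push_cast; exact hmod
        exact_mod_cast this
      have hq' : m1 / R = m2 / R := hq
      calc m1 = R * (m1 / R) + m1 % R := (Nat.div_add_mod m1 R).symm
        _ = R * (m2 / R) + m2 % R := by rw [hq', hmodn]
        _ = m2 := Nat.div_add_mod m2 R)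
  simpa using h

theorem L2_orthogonality (g : ℕ) (hg : 2 ≤ g) (α : ℕ → ℕ → ℝ) (i : ℕ)
    (R : ℕ) (hR1 : 1 ≤ R) (hRg : R ∣ g) (a : ℤ) (ha : IsCoprime a (R : ℤ)) (β : ℝ) :
    ∑ r ∈ Finset.range R, phi g α i (β + (a : ℝ) * r / R) ^ 2 ≤ (g : ℝ) ^ 2 := by
  classical
  have hRne : (R : ℝ) ≠ 0 := Nat.cast_ne_zero.mpr (by omega)
  -- per-r expansion
  have hr : ∀ r : ℕ, ((phi g α i (β + (a : ℝ) * r / R) : ℝ) : ℂ) ^ 2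
      = ∑ n ∈ Finset.range g, ∑ m ∈ Finset.range g,
          eC ((α i n - β * n) - (α i m - β * m) + (a : ℝ) * ((m : ℝ) - (n : ℝ)) * r / R) := by
    intro r
    have h1 : ((phi g α i (β + (a : ℝ) * r / R) : ℝ) : ℂ) ^ 2
        = (∑ n ∈ Finset.range g, eC (α i n - (β + (a : ℝ) * r / R) * n)) *
          (starRingEnd ℂ) (∑ n ∈ Finset.range g, eC (α i n - (β + (a : ℝ) * r / R) * n)) := by
      rw [phi, Complex.mul_conj, ← Complex.sq_norm]
      push_cast
      ring
    rw [h1, map_sum, Finset.sum_mul_sum]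
    refine Finset.sum_congr rfl fun n _ => Finset.sum_congr rfl fun m _ => ?_
    rw [eC_conj, ← eC_add]
    congr 1
    field_simp
    ring
  -- key identity
  have key : ((∑ r ∈ Finset.range R, phi g α i (β + (a : ℝ) * r / R) ^ 2 : ℝ) : ℂ)
      = ∑ n ∈ Finset.range g, ∑ m ∈ Finset.range g,
          eC ((α i n - β * n) - (α i m - β * m)) *
            (if (R : ℤ) ∣ ((m : ℤ) - (n : ℤ)) then (R : ℂ) else 0) := by
    push_cast
    calc ∑ r ∈ Finset.range R, ((phi g α i (β + (a : ℝ) * r / R) : ℝ) : ℂ) ^ 2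
        = ∑ r ∈ Finset.range R, ∑ n ∈ Finset.range g, ∑ m ∈ Finset.range g,
            eC ((α i n - β * n) - (α i m - β * m) + (a : ℝ) * ((m : ℝ) - (n : ℝ)) * r / R) :=
          Finset.sum_congr rfl fun r _ => hr r
      _ = ∑ n ∈ Finset.range g, ∑ m ∈ Finset.range g, ∑ r ∈ Finset.range R,
            eC ((α i n - β * n) - (α i m - β * m) + (a : ℝ) * ((m : ℝ) - (n : ℝ)) * r / R) := by
          rw [Finset.sum_comm]
          exact Finset.sum_congr rfl fun n _ => Finset.sum_comm
      _ = _ := by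
          refine Finset.sum_congr rfl fun n _ => Finset.sum_congr rfl fun m _ => ?_
          have hgeo := eC_geom R hR1 a ha ((m : ℤ) - (n : ℤ))
          calc ∑ r ∈ Finset.range R,
                eC ((α i n - β * n) - (α i m - β * m) + (a : ℝ) * ((m : ℝ) - (n : ℝ)) * r / R)
              = ∑ r ∈ Finset.range R, eC ((α i n - β * n) - (α i m - β * m)) *
                  eC ((a : ℝ) * (((m : ℤ) - (n : ℤ) : ℤ) : ℝ) * r / R) := by
                refine Finset.sum_congr rfl fun r _ => ?_
                rw [← eC_add]
                congr 1
                push_cast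
                ring
            _ = eC ((α i n - β * n) - (α i m - β * m)) * ∑ r ∈ Finset.range R,
                  eC ((a : ℝ) * (((m : ℤ) - (n : ℤ) : ℤ) : ℝ) * r / R) := by
                rw [Finset.mul_sum]
            _ = _ := by rw [hgeo]
  -- bound
  have hnonneg : 0 ≤ ∑ r ∈ Finset.range R, phi g α i (β + (a : ℝ) * r / R) ^ 2 :=
    Finset.sum_nonneg fun r _ => sq_nonneg _
  have habs : ∀ n m : ℕ, ‖eC ((α i n - β * n) - (α i m - β * m)) *
      (if (R : ℤ) ∣ ((m : ℤ) - (n : ℤ)) then (R : ℂ) else 0)‖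
      = (if (R : ℤ) ∣ ((m : ℤ) - (n : ℤ)) then (R : ℝ) else 0) := by
    intro n m
    rw [norm_mul, eC_abs, one_mul]
    split_ifs <;> simp
  calc ∑ r ∈ Finset.range R, phi g α i (β + (a : ℝ) * r / R) ^ 2
      = ‖(((∑ r ∈ Finset.range R, phi g α i (β + (a : ℝ) * r / R) ^ 2 : ℝ)) : ℂ)‖ := by
        rw [Complex.norm_real, Real.norm_of_nonneg hnonneg]
    _ = ‖∑ n ∈ Finset.range g, ∑ m ∈ Finset.range g,
          eC ((α i n - β * n) - (α i m - β * m)) *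
            (if (R : ℤ) ∣ ((m : ℤ) - (n : ℤ)) then (R : ℂ) else 0)‖ := by rw [key]
    _ ≤ ∑ n ∈ Finset.range g, ∑ m ∈ Finset.range g,
          (if (R : ℤ) ∣ ((m : ℤ) - (n : ℤ)) then (R : ℝ) else 0) := by
        refine le_trans (norm_sum_le _ _) (Finset.sum_le_sum fun n _ => ?_)
        refine le_trans (norm_sum_le _ _) (Finset.sum_le_sum fun m _ => ?_)
        rw [habs]
    _ ≤ ∑ n ∈ Finset.range g, (g : ℝ) := by
        refine Finset.sum_le_sum fun n _ => ?_
        have hsum : ∑ m ∈ Finset.range g, (if (R : ℤ) ∣ ((m : ℤ) - (n : ℤ)) then (R : ℝ) else 0)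
            = (((Finset.range g).filter (fun m : ℕ => (R : ℤ) ∣ ((m : ℤ) - (n : ℤ)))).card : ℝ) * R := by
          rw [← Finset.sum_filter, Finset.sum_const, nsmul_eq_mul]
        rw [hsum]
        have hcard := count_le g R hR1 hRg n
        have : ((((Finset.range g).filter (fun m : ℕ => (R : ℤ) ∣ ((m : ℤ) - (n : ℤ)))).card : ℝ)) ≤ ((g / R : ℕ) : ℝ) :=
          Nat.cast_le.mpr hcard
        calc ((((Finset.range g).filter (fun m : ℕ => (R : ℤ) ∣ ((m : ℤ) - (n : ℤ)))).card : ℝ)) * R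
            ≤ ((g / R : ℕ) : ℝ) * R := by
              apply mul_le_mul_of_nonneg_right this (by positivity)
          _ = ((g / R * R : ℕ) : ℝ) := by push_cast; ring
          _ = (g : ℝ) := by rw [Nat.div_mul_cancel hRg]
    _ = (g : ℝ) ^ 2 := by
        rw [Finset.sum_const, Finset.card_range, nsmul_eq_mul]
        ring
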